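/- Define f on 3×3 real matrices by f(m) = m₁₁ + m₁₂ + m₂₁ - m₂₂ - 2m₃₃. Then for any (x,y) and (x',y') in the blunt square S_b = [-1,1]² \ {-1,1}², and any s,t ≥ 0 with s·t > 0, we have f(m) < 0 where m is the rank-one matrix (s·x, s·y ; s) ⊗ (t·x', t·y' ; t), i.e., mᵢⱼ = uᵢvⱼ with u = (sx, sy, s), v = (tx', ty', t). -/
import Mathlib

lemma blunt_key (x y x' y' : ℝ)
    (hx : |x| ≤ 1) (hy : |y| ≤ 1) (hx' : |x'| ≤ 1) (hy' : |y'| ≤ 1)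
    (h1 : ¬ (|x| = 1 ∧ |y| = 1)) (h2 : ¬ (|x'| = 1 ∧ |y'| = 1)) :
    x * x' + x * y' + y * x' - y * y' < 2 := by
  have d1 : |x| < 1 ∨ |y| < 1 := by
    rcases lt_or_eq_of_le hx with h | h
    · exact Or.inl h
    rcases lt_or_eq_of_le hy with h' | h'
    · exact Or.inr h'
    exact absurd ⟨h, h'⟩ h1
  have d2 : |x'| < 1 ∨ |y'| < 1 := by
    rcases lt_or_eq_of_le hx' with h | h
    · exact Or.inl h
    rcases lt_or_eq_of_le hy' with h' | h'
    · exact Or.inr h'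
    exact absurd ⟨h, h'⟩ h2
  have key : x * x' + x * y' + y * x' - y * y'
      = x * (x' + y') + y * (x' - y') := by ring
  rw [key]
  rcases eq_or_ne x' y' with he | hne
  · -- E = 2 x x'
    subst he
    have hlt : |x'| < 1 := by
      rcases d2 with h | h
      · exact h
      · exact h
    have : x * (2 * x') ≤ |x| * (2 * |x'|) := by
      calc x * (2 * x') ≤ |x * (2 * x')| := le_abs_self _
        _ = |x| * (2 * |x'|) := by rw [abs_mul, abs_mul]; simp [abs_of_nonneg]
    nlinarith [abs_nonneg x, abs_nonneg x']
  rcases eq_or_ne x' (-y') with he | hne'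
  · -- E = 2 y x'
    have hy'x : |y'| = |x'| := by rw [he, abs_neg]
    have hlt : |x'| < 1 := by
      rcases d2 with h | h
      · exact h
      · rwa [hy'x] at h
    have hE : x * (x' + y') + y * (x' - y') = y * (2 * x') := by
      rw [he]; ring
    rw [hE]
    have : y * (2 * x') ≤ |y| * (2 * |x'|) := by
      calc y * (2 * x') ≤ |y * (2 * x')| := le_abs_self _
        _ = |y| * (2 * |x'|) := by rw [abs_mul, abs_mul]; simp [abs_of_nonneg]
    nlinarith [abs_nonneg y, abs_nonneg x']
  · -- general case: x' + y' ≠ 0 and x' - y' ≠ 0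
    have hp : 0 < |x' + y'| := abs_pos.mpr (by intro h; exact hne' (by linarith [eq_neg_of_add_eq_zero_left h]))
    have hq : 0 < |x' - y'| := abs_pos.mpr (sub_ne_zero.mpr hne)
    have hsum : |x' + y'| + |x' - y'| ≤ 2 := by
      rcases abs_cases (x' + y') with ⟨e1, _⟩ | ⟨e1, _⟩ <;>
        rcases abs_cases (x' - y') with ⟨e2, _⟩ | ⟨e2, _⟩ <;>
        rw [abs_le] at hx' hy' <;> rw [e1, e2] <;> linarith
    have t1 : x * (x' + y') ≤ |x| * |x' + y'| := by
      calc x * (x' + y') ≤ |x * (x' + y')| := le_abs_self _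
        _ = |x| * |x' + y'| := abs_mul _ _
    have t2 : y * (x' - y') ≤ |y| * |x' - y'| := by
      calc y * (x' - y') ≤ |y * (x' - y')| := le_abs_self _
        _ = |y| * |x' - y'| := abs_mul _ _
    rcases d1 with h | h
    · have s1 : |x| * |x' + y'| < |x' + y'| := by nlinarith
      have s2 : |y| * |x' - y'| ≤ |x' - y'| := by nlinarith [abs_nonneg y]
      linarith
    · have s1 : |x| * |x' + y'| ≤ |x' + y'| := by nlinarith [abs_nonneg x]
      have s2 : |y| * |x' - y'| < |x' - y'| := by nlinarith
      linarith

theorem f_neg_on_blunt_square_products (x y x' y' s t : ℝ)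
    (hx : |x| ≤ 1) (hy : |y| ≤ 1) (hx' : |x'| ≤ 1) (hy' : |y'| ≤ 1)
    (h1 : ¬ (|x| = 1 ∧ |y| = 1)) (h2 : ¬ (|x'| = 1 ∧ |y'| = 1))
    (hs : 0 ≤ s) (ht : 0 ≤ t) (hst : 0 < s * t)
    (m : Matrix (Fin 3) (Fin 3) ℝ)
    (hm : ∀ i j, m i j = ![s * x, s * y, s] i * ![t * x', t * y', t] j) :
    m 0 0 + m 0 1 + m 1 0 - m 1 1 - 2 * m 2 2 < 0 := by
  have key := blunt_key x y x' y' hx hy hx' hy' h1 h2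
  have e00 := hm 0 0
  have e01 := hm 0 1
  have e10 := hm 1 0
  have e11 := hm 1 1
  have e22 := hm 2 2
  simp only [Matrix.cons_val_zero, Matrix.cons_val_one, Matrix.head_cons,
    Matrix.cons_val_two, Matrix.tail_cons] at e00 e01 e10 e11 e22
  rw [e00, e01, e10, e11, e22]
  have : s * x * (t * x') + s * x * (t * y') + s * y * (t * x') - s * y * (t * y') - 2 * (s * t)
      = s * t * ((x * x' + x * y' + y * x' - y * y') - 2) := by ring
  rw [this]
  exact mul_neg_of_pos_of_neg hst (by linarith)
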